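/- If i ∈ ℤ satisfies d_i = 1, then the path (i + c_i, c_i) — the longest member of N with target i, which is the compression of an injective syllable — has grade 2. -/
import Mathlib


/-- Paths of the quiver `ℤ` (arrows `i → i - 1`) are pairs `(source, length)`;
`p` is a subpath of `q` iff the source of `p` is at most that of `q` and the
target of `q` is at most that of `p`. -/
def ZIsSubpath (p q : ℤ × ℕ) : Prop :=
  p.1 ≤ q.1 ∧ q.1 - (q.2 : ℤ) ≤ p.1 - (p.2 : ℤ)

/-- Proper subpath: a subpath that is not the whole path. -/
def ZIsProperSubpath (p q : ℤ × ℕ) : Prop :=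
  ZIsSubpath p q ∧ p ≠ q

/-- A path is factorisable (w.r.t. the factorisable vertices, i.e. the values
of `x`) if both its source and its target are factorisable vertices. -/
def IsFactorisable (x : ℤ → ℤ) (p : ℤ × ℕ) : Prop :=
  (∃ s : ℤ, x s = p.1) ∧ ∃ s : ℤ, x s = p.1 - (p.2 : ℤ)

/-- The grade of the path `(i, ℓ)` is `m i - m (i - ℓ)`, where
`m t = max {s : x s ≤ t}`. -/
def pathGrade (m : ℤ → ℤ) (p : ℤ × ℕ) : ℤ :=
  m p.1 - m (p.1 - (p.2 : ℤ))

/-- **Compressions of injective syllables have grade 2.** If `d i = 1`, then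
the longest member of `N` with target `i`, namely the path `(i + c i, c i)`,
has grade 2. -/
theorem injective_syllable_compression_grade_two (x m : ℤ → ℤ) (hx : StrictMono x)
    (hm : ∀ t : ℤ, x (m t) ≤ t ∧ ∀ s : ℤ, x s ≤ t → s ≤ m t)
    (N : Set (ℤ × ℕ))
    (hN0 : ∀ i : ℤ, (i, 0) ∈ N)
    (hNdown : ∀ p q : ℤ × ℕ, ZIsSubpath p q → q ∈ N → p ∈ N)
    (hNbdd : ∃ B : ℕ, ∀ p ∈ N, p.2 ≤ B)
    (C : Set (ℤ × ℕ)) (hCN : C ⊆ N)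
    (hCanti : ∀ p ∈ C, ∀ q ∈ C, ZIsSubpath p q → p = q)
    (hCmax : ∀ p ∈ C, ∀ q ∈ N, ZIsSubpath p q → p = q)
    (hC2 : ∀ p : ℤ × ℕ, IsFactorisable x p → pathGrade m p = 2 → p ∈ C)
    (c d : ℤ → ℕ)
    (hc : ∀ i : ℤ, (i + (c i : ℤ), c i) ∈ N ∧ ∀ ℓ : ℕ, (i + (ℓ : ℤ), ℓ) ∈ N → ℓ ≤ c i)
    (hd : ∀ i : ℤ, (d i = 0 ∧ ∃ p ∈ C, p.1 - (p.2 : ℤ) = i) ∨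
      (d i = 1 ∧ ¬ ∃ p ∈ C, p.1 - (p.2 : ℤ) = i)) :
    ∀ i : ℤ, d i = 1 → pathGrade m (i + (c i : ℤ), c i) = 2 := by

  intro i hdi
  have hxm : ∀ t, x (m t) ≤ t := fun t => (hm t).1
  have hmax : ∀ s t : ℤ, x s ≤ t → s ≤ m t := fun s t h => (hm t).2 s h
  have hmx : ∀ s : ℤ, m (x s) = s := by
    intro s
    refine le_antisymm ?_ (hmax s (x s) le_rfl)
    exact hx.le_iff_le.mp (hxm (x s))
  have hlt : ∀ t : ℤ, t < x (m t + 1) := by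
    intro t
    by_contra h
    push_neg at h
    have := hmax _ _ h
    omega
  set k := m i with hk
  set c' := c i with hc'
  have hcN : ((i : ℤ) + (c' : ℤ), c') ∈ N := (hc i).1
  have h2le : m (i + (c' : ℤ)) ≤ k + 2 := by
    by_contra h
    push_neg at h
    have h3 : k + 3 ≤ m (i + (c' : ℤ)) := by omega
    have hle13 : x (k + 1) ≤ x (k + 3) := hx.le_iff_le.mpr (by omega)
    set ℓ : ℕ := (x (k + 3) - x (k + 1)).toNat with hℓ
    have hℓc : (ℓ : ℤ) = x (k + 3) - x (k + 1) := Int.toNat_of_nonneg (by omega)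
    have hsrc : x (k + 3) ≤ i + (c' : ℤ) := (hx.le_iff_le.mpr h3).trans (hxm _)
    have hlti : i < x (k + 1) := by rw [hk]; exact hlt i
    have hq'sub : ZIsSubpath (x (k + 3), ℓ) (i + (c' : ℤ), c') := by
      refine ⟨hsrc, ?_⟩
      show i + (c' : ℤ) - (c' : ℤ) ≤ x (k + 3) - (ℓ : ℤ)
      omega
    have hq'N : (x (k + 3), ℓ) ∈ N := hNdown _ _ hq'sub hcN
    have hq'C : (x (k + 3), ℓ) ∈ C := by
      apply hC2
      · exact ⟨⟨k + 3, rfl⟩, ⟨k + 1, by show x (k + 1) = x (k + 3) - (ℓ : ℤ); omega⟩⟩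
      · show m (x (k + 3)) - m (x (k + 3) - (ℓ : ℤ)) = 2
        rw [show x (k + 3) - (ℓ : ℤ) = x (k + 1) by omega, hmx, hmx]; ring
    have heq := hCmax _ hq'C _ hcN hq'sub
    have h1 := congrArg Prod.fst heq
    have h2 := congrArg Prod.snd heq
    simp only at h1 h2
    omega
  have h2ge : k + 2 ≤ m (i + (c' : ℤ)) := by
    by_contra h
    push_neg at h
    have hle02 : x k ≤ x (k + 2) := hx.le_iff_le.mpr (by omega)
    set ℓ : ℕ := (x (k + 2) - x k).toNat with hℓ
    have hℓc : (ℓ : ℤ) = x (k + 2) - x k := Int.toNat_of_nonneg (by omega)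
    have hrC : (x (k + 2), ℓ) ∈ C := by
      apply hC2
      · exact ⟨⟨k + 2, rfl⟩, ⟨k, by show x k = x (k + 2) - (ℓ : ℤ); omega⟩⟩
      · show m (x (k + 2)) - m (x (k + 2) - (ℓ : ℤ)) = 2
        rw [show x (k + 2) - (ℓ : ℤ) = x k by omega, hmx, hmx]; ring
    have hxk_lt : x k < i := by
      rcases hd i with ⟨h0, _⟩ | ⟨_, hne⟩
      · omega
      · have hle : x k ≤ i := hxm i
        rcases lt_or_eq_of_le hle with h' | h'
        · exact h'
        · exact absurd ⟨(x (k + 2), ℓ), hrC,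
            by show x (k + 2) - (ℓ : ℤ) = i; omega⟩ hne
    have hxlt : i + (c' : ℤ) < x (k + 2) := by
      by_contra h'
      push_neg at h'
      have := hmax (k + 2) _ h'
      omega
    have hsN : (i + ((c' + 1 : ℕ) : ℤ), c' + 1) ∈ N := by
      apply hNdown _ _ _ (hCN hrC)
      constructor
      · show i + ((c' + 1 : ℕ) : ℤ) ≤ x (k + 2); push_cast; omega
      · show x (k + 2) - (ℓ : ℤ) ≤ i + ((c' + 1 : ℕ) : ℤ) - ((c' + 1 : ℕ) : ℤ)
        push_cast; omega
    have := (hc i).2 (c' + 1) hsN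
    omega
  show m (i + (c' : ℤ)) - m (i + (c' : ℤ) - (c' : ℤ)) = 2
  rw [show i + (c' : ℤ) - (c' : ℤ) = i by ring]
  omega
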